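/- Fix ρ ∈ [0,1). Under Assumptions 1, 2 and 3 (including properties (v) and (vi)), and assuming (0,𝟎) ∈ F̄_ρ, the set F̄_ρ is robustly positive invariant for the difference inclusion z⁺ ∈ H_ρ(z,w) with w ∈ W (i.e. the stability filter is recursively feasible), and the origin (x,ũ) = 0 is robustly asymptotically stable for z⁺ ∈ H_ρ(z,w) with region of attraction F̄_ρ: there exist β of class KL and γ of class K such that every solution ψ from any z ∈ F̄_ρ under any disturbance sequence 𝐰 with values in W satisfies ‖ψ(k)‖ ≤ β(‖z‖, k) + γ(‖𝐰‖) for all k ∈ ℕ. -/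

import Mathlib

open scoped Classical Pointwise
open Filter

noncomputable section

/-- `Vec n` is `ℝ^n` with the Euclidean norm. -/
abbrev Vec (n : ℕ) : Type := EuclideanSpace ℝ (Fin n)

/-- A function `σ : [0,∞) → [0,∞)` is of class K if it is continuous,
strictly increasing and `σ 0 = 0`. -/
def ClassK (σ : ℝ → ℝ) : Prop :=
  ContinuousOn σ (Set.Ici 0) ∧ StrictMonoOn σ (Set.Ici 0) ∧ σ 0 = 0

/-- Class K∞: class K and unbounded. -/
def ClassKInf (σ : ℝ → ℝ) : Prop :=
  ClassK σ ∧ Tendsto σ atTop atTop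

/-- Class KL function `β : [0,∞) × ℕ → [0,∞)`. -/
def ClassKL (β : ℝ → ℕ → ℝ) : Prop :=
  (∀ k, ClassK fun s => β s k) ∧
    ∀ s, 0 ≤ s → Antitone (fun k => β s k) ∧ Tendsto (fun k => β s k) atTop (nhds 0)

section Framework

variable {nx nu nw N : ℕ}

/-- Nominal `k`-step trajectory `φ(x,𝐮;k)` of `x⁺ = f(x,u,0)` (horizon `N+1`). -/
def phi (f : Vec nx → Vec nu → Vec nw → Vec nx) (x : Vec nx)
    (u : Fin (N + 1) → Vec nu) : ℕ → Vec nx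
  | 0 => x
  | k + 1 => f (phi f x u k) (if h : k < N + 1 then u ⟨k, h⟩ else 0) 0

/-- The cost `V(x,𝐮) = Σ l(φ(x,𝐮;k),u_k) + m(φ(x,𝐮;N))`. -/
def Vcost (f : Vec nx → Vec nu → Vec nw → Vec nx) (l : Vec nx → Vec nu → ℝ)
    (m : Vec nx → ℝ) (x : Vec nx) (u : Fin (N + 1) → Vec nu) : ℝ :=
  (∑ k : Fin (N + 1), l (phi f x u (k : ℕ)) (u k)) + m (phi f x u (N + 1))

/-- Feasibility of a state–input-sequence pair. -/
def Feasible (f : Vec nx → Vec nu → Vec nw → Vec nx)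
    (Ω : Fin (N + 1) → Set (Vec nx × Vec nu)) (Zf : Set (Vec nx))
    (x : Vec nx) (u : Fin (N + 1) → Vec nu) : Prop :=
  (∀ k : Fin (N + 1), (phi f x u (k : ℕ), u k) ∈ Ω k) ∧ phi f x u (N + 1) ∈ Zf

/-- The set `𝒰_ρ(x,ũ)` of feasible input sequences of the stability filter. -/
def Useq (f : Vec nx → Vec nu → Vec nw → Vec nx) (l : Vec nx → Vec nu → ℝ)
    (m : Vec nx → ℝ) (Ω : Fin (N + 1) → Set (Vec nx × Vec nu)) (Zf : Set (Vec nx))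
    (ξc : Vec nx → (Fin (N + 1) → Vec nu) → Vec nw → Fin (N + 1) → Vec nu)
    (ρ : ℝ) (x : Vec nx) (ut : Fin (N + 1) → Vec nu) : Set (Fin (N + 1) → Vec nu) :=
  {v | Feasible f Ω Zf x v ∧
    Vcost f l m (f x (v 0) 0) (ξc (f x (v 0) 0) v 0) ≤
      Vcost f l m x ut - (1 - ρ) * l x (ut 0)}

/-- The admissible set `F̄_ρ` of state–warmstart pairs. -/
def Fbar (f : Vec nx → Vec nu → Vec nw → Vec nx) (l : Vec nx → Vec nu → ℝ)
    (m : Vec nx → ℝ) (Ω : Fin (N + 1) → Set (Vec nx × Vec nu)) (Zf : Set (Vec nx))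
    (ξc : Vec nx → (Fin (N + 1) → Vec nu) → Vec nw → Fin (N + 1) → Vec nu)
    (ρ : ℝ) : Set (Vec nx × (Fin (N + 1) → Vec nu)) :=
  {p | Feasible f Ω Zf p.1 p.2 ∧ (Useq f l m Ω Zf ξc ρ p.1 p.2).Nonempty}

/-- The warmstart generating function `ξ`, switching between `ξ_f` and `ξ_c`. -/
def warmstart (f : Vec nx → Vec nu → Vec nw → Vec nx) (l : Vec nx → Vec nu → ℝ)
    (m : Vec nx → ℝ) (Zf : Set (Vec nx))
    (ξc : Vec nx → (Fin (N + 1) → Vec nu) → Vec nw → Fin (N + 1) → Vec nu)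
    (ξf : Vec nx → (Fin (N + 1) → Vec nu) → Fin (N + 1) → Vec nu)
    (x : Vec nx) (u : Fin (N + 1) → Vec nu) (w : Vec nw) : Fin (N + 1) → Vec nu :=
  if x ∈ Zf ∧ Vcost f l m x (ξf x u) ≤ Vcost f l m x (ξc x u w) then ξf x u
  else ξc x u w

/-- The closed-loop difference inclusion map `H_ρ(z,w)`. -/
def Hmap (f : Vec nx → Vec nu → Vec nw → Vec nx) (l : Vec nx → Vec nu → ℝ)
    (m : Vec nx → ℝ) (Ω : Fin (N + 1) → Set (Vec nx × Vec nu)) (Zf : Set (Vec nx))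
    (ξc : Vec nx → (Fin (N + 1) → Vec nu) → Vec nw → Fin (N + 1) → Vec nu)
    (ξf : Vec nx → (Fin (N + 1) → Vec nu) → Fin (N + 1) → Vec nu)
    (ρ : ℝ) (z : Vec nx × (Fin (N + 1) → Vec nu)) (w : Vec nw) :
    Set (Vec nx × (Fin (N + 1) → Vec nu)) :=
  {zp | ∃ v ∈ Useq f l m Ω Zf ξc ρ z.1 z.2,
    zp = (f z.1 (v 0) w, warmstart f l m Zf ξc ξf (f z.1 (v 0) w) v w)}

lemma phi_continuous (f : Vec nx → Vec nu → Vec nw → Vec nx)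
    (hfc : Continuous fun p : Vec nx × Vec nu × Vec nw => f p.1 p.2.1 p.2.2) (k : ℕ) :
    Continuous fun p : Vec nx × (Fin (N + 1) → Vec nu) => phi f p.1 p.2 k := by
  induction k with
  | zero => exact continuous_fst
  | succ k ih =>
    show Continuous fun p : Vec nx × (Fin (N + 1) → Vec nu) =>
      f (phi f p.1 p.2 k) (if h : k < N + 1 then p.2 ⟨k, h⟩ else 0) 0
    by_cases h : k < N + 1
    · simp only [dif_pos h]
      exact hfc.comp (ih.prodMk (((continuous_apply _).comp continuous_snd).prodMk
        continuous_const))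
    · simp only [dif_neg h]
      exact hfc.comp (ih.prodMk (continuous_const.prodMk continuous_const))

lemma Vcost_continuous (f : Vec nx → Vec nu → Vec nw → Vec nx)
    (l : Vec nx → Vec nu → ℝ) (m : Vec nx → ℝ)
    (hfc : Continuous fun p : Vec nx × Vec nu × Vec nw => f p.1 p.2.1 p.2.2)
    (hlc : Continuous fun p : Vec nx × Vec nu => l p.1 p.2) (hmc : Continuous m) :
    Continuous fun p : Vec nx × (Fin (N + 1) → Vec nu) => Vcost f l m p.1 p.2 := by
  unfold Vcost
  apply Continuous.add
  · apply continuous_finset_sum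
    intro k _
    exact hlc.comp ((phi_continuous f hfc _).prodMk
      ((continuous_apply (A := fun _ => Vec nu) k).comp continuous_snd))
  · exact hmc.comp (phi_continuous f hfc _)

lemma phi_zero (f : Vec nx → Vec nu → Vec nw → Vec nx) (hf0 : f 0 0 0 = 0) (k : ℕ) :
    phi f (0 : Vec nx) (fun _ : Fin (N + 1) => (0 : Vec nu)) k = 0 := by
  induction k with
  | zero => rfl
  | succ k ih =>
    show f (phi f 0 _ k) (if h : k < N + 1 then (0:Vec nu) else 0) 0 = 0
    rw [ih]
    split <;> exact hf0

lemma Vcost_zero (f : Vec nx → Vec nu → Vec nw → Vec nx)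
    (l : Vec nx → Vec nu → ℝ) (m : Vec nx → ℝ) (hf0 : f 0 0 0 = 0)
    (hl0 : l 0 0 = 0) (hm0 : m 0 = 0) :
    Vcost f l m (0 : Vec nx) (fun _ : Fin (N + 1) => (0 : Vec nu)) = 0 := by
  unfold Vcost
  simp [phi_zero f hf0, hl0, hm0]

lemma Vcost_lower (f : Vec nx → Vec nu → Vec nw → Vec nx)
    (l : Vec nx → Vec nu → ℝ) (m : Vec nx → ℝ)
    (Ω : Fin (N + 1) → Set (Vec nx × Vec nu)) (Zf : Set (Vec nx))
    (hmnn : ∀ x, 0 ≤ m x)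
    (αl : ℝ → ℝ) (hαlm : MonotoneOn αl (Set.Ici 0)) (hαl0 : αl 0 = 0)
    (hlb : ∀ k, ∀ p ∈ Ω k, αl ‖p‖ ≤ l p.1 p.2)
    (x : Vec nx) (u : Fin (N + 1) → Vec nu) (hfeas : Feasible f Ω Zf x u) :
    αl ‖((x, u) : Vec nx × (Fin (N + 1) → Vec nu))‖ ≤ Vcost f l m x u := by
  have hterm : ∀ k : Fin (N + 1), αl ‖(phi f x u (k : ℕ), u k)‖ ≤ l (phi f x u (k : ℕ)) (u k) :=
    fun k => hlb k _ (hfeas.1 k)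
  have htnn : ∀ k : Fin (N + 1), (0:ℝ) ≤ l (phi f x u (k : ℕ)) (u k) := by
    intro k
    refine le_trans ?_ (hterm k)
    rw [← hαl0]
    exact hαlm (le_refl (0:ℝ)) (norm_nonneg _) (norm_nonneg _)
  -- single term dominates
  have key : ∀ k : Fin (N + 1), l (phi f x u (k : ℕ)) (u k) ≤ Vcost f l m x u := by
    intro k
    unfold Vcost
    have := Finset.single_le_sum (f := fun k : Fin (N+1) => l (phi f x u (k : ℕ)) (u k))
      (fun i _ => htnn i) (Finset.mem_univ k)
    have hm := hmnn (phi f x u (N + 1))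
    linarith
  rw [Prod.norm_def]
  rcases max_cases ‖x‖ ‖u‖ with ⟨heq, hle⟩ | ⟨heq, hle⟩ <;> rw [heq]
  · -- ‖x‖ case : k = 0
    refine le_trans ?_ (key 0)
    refine le_trans ?_ (hterm 0)
    apply hαlm (norm_nonneg _) (norm_nonneg _)
    show ‖x‖ ≤ ‖(phi f x u ((0:Fin (N+1)) : ℕ), u 0)‖
    have : phi f x u ((0:Fin (N+1)) : ℕ) = x := rfl
    rw [this, Prod.norm_def]
    exact le_max_left _ _
  · -- ‖u‖ case
    obtain ⟨k, -, hk⟩ := Finset.exists_mem_eq_sup (Finset.univ : Finset (Fin (N+1)))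
      Finset.univ_nonempty (fun i => (‖u i‖₊ : NNReal))
    have hnorm : ‖u‖ = ‖u k‖ := by
      rw [Pi.norm_def, hk]; rfl
    refine le_trans ?_ (key k)
    refine le_trans ?_ (hterm k)
    apply hαlm (norm_nonneg _) (norm_nonneg _)
    rw [hnorm, Prod.norm_def]
    exact le_max_right _ _

lemma Feasible_bound (f : Vec nx → Vec nu → Vec nw → Vec nx)
    (Ω : Fin (N + 1) → Set (Vec nx × Vec nu)) (Zf : Set (Vec nx))
    (hΩ : ∀ k, IsCompact (Ω k)) :
    ∃ R : ℝ, 0 < R ∧ ∀ x u, Feasible f Ω Zf x u →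
      ‖((x, u) : Vec nx × (Fin (N + 1) → Vec nu))‖ ≤ R := by
  have h : ∀ k, ∃ Rk : ℝ, ∀ p ∈ Ω k, ‖p‖ ≤ Rk := by
    intro k
    obtain ⟨Rk, hRk⟩ := (hΩ k).isBounded.exists_norm_le
    exact ⟨Rk, hRk⟩
  choose Rk hRk using h
  obtain ⟨R0, hR0⟩ := Finset.exists_le (Finset.image Rk Finset.univ)
  have hR0' : ∀ k : Fin (N+1), Rk k ≤ R0 := fun k => hR0 _ (Finset.mem_image_of_mem Rk (Finset.mem_univ k))
  refine ⟨max R0 1, lt_of_lt_of_le one_pos (le_max_right _ _), ?_⟩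
  intro x u hfeas
  rw [Prod.norm_def]
  apply max_le
  · have := hRk 0 _ (hfeas.1 0)
    have hx : ‖x‖ ≤ ‖(phi f x u ((0:Fin (N+1)):ℕ), u 0)‖ := by
      have hphi : phi f x u ((0:Fin (N+1)) : ℕ) = x := rfl
      rw [hphi, Prod.norm_def]; exact le_max_left _ _
    exact hx.trans (this.trans ((hR0' 0).trans (le_max_left _ _)))
  · rw [pi_norm_le_iff_of_nonneg (le_trans zero_le_one (le_max_right _ _))]
    intro k
    have := hRk k _ (hfeas.1 k)
    have hu : ‖u k‖ ≤ ‖(phi f x u (k:ℕ), u k)‖ := by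
      rw [Prod.norm_def]; exact le_max_right _ _
    exact hu.trans (this.trans ((hR0' k).trans (le_max_left _ _)))


end Framework


lemma exists_classK_dom (g : ℝ → ℝ) (hg : Monotone g) (h0 : ∀ x, x ≤ 0 → g x = 0)
    (C : ℝ) (hb : ∀ x, g x ≤ C) (hcont : ContinuousAt g 0) :
    ∃ γ : ℝ → ℝ, ClassK γ ∧ ∀ r, 0 ≤ r → g r ≤ γ r := by
  have hgnn : ∀ x, 0 ≤ g x := by
    intro x
    rcases le_or_gt x 0 with h | h
    · rw [h0 x h]
    · rw [← h0 0 le_rfl]; exact hg h.le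
  set γ' : ℝ → ℝ := fun r => ∫ t in (1:ℝ)..2, g (r * t) with hγ'
  have hmeas : ∀ r : ℝ, MeasureTheory.AEStronglyMeasurable (fun t => g (r * t))
      (MeasureTheory.volume.restrict (Set.uIoc (1:ℝ) 2)) := by
    intro r
    exact ((hg.measurable).comp (measurable_const.mul measurable_id)).aestronglyMeasurable
  have hint : ∀ r : ℝ, 0 ≤ r → IntervalIntegrable (fun t => g (r * t))
      MeasureTheory.volume 1 2 := by
    intro r hr
    apply MonotoneOn.intervalIntegrable
    intro t1 ht1 t2 ht2 h12
    exact hg (mul_le_mul_of_nonneg_left h12 hr)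
  have hle : ∀ r : ℝ, 0 ≤ r → g r ≤ γ' r := by
    intro r hr
    have h1 : (∫ t in (1:ℝ)..2, g r) ≤ γ' r := by
      apply intervalIntegral.integral_mono_on (by norm_num) (by simp) (hint r hr)
      intro t ht
      exact hg (le_mul_of_one_le_right hr ht.1)
    rw [intervalIntegral.integral_const] at h1
    norm_num at h1
    exact h1
  have hmono : ∀ r1 r2 : ℝ, 0 ≤ r1 → r1 ≤ r2 → γ' r1 ≤ γ' r2 := by
    intro r1 r2 hr1 h12
    apply intervalIntegral.integral_mono_on (by norm_num) (hint r1 hr1) (hint r2 (hr1.trans h12))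
    intro t ht
    exact hg (mul_le_mul_of_nonneg_right h12 (by linarith [ht.1]))
  have hcont' : ∀ r : ℝ, 0 ≤ r → ContinuousAt γ' r := by
    intro r hr
    apply intervalIntegral.continuousAt_of_dominated_interval
      (bound := fun _ => C)
    · exact Eventually.of_forall fun x => hmeas x
    · filter_upwards with x
      filter_upwards with t _
      rw [Real.norm_eq_abs, abs_of_nonneg (hgnn _)]
      exact hb _
    · exact intervalIntegrable_const
    · rcases eq_or_lt_of_le hr with h | h
      · filter_upwards with t _
        have hmt : ContinuousAt (fun x : ℝ => x * t) r := by fun_prop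
        have h2 : ContinuousAt g (r * t) := by rw [← h]; simpa using hcont
        exact ContinuousAt.comp (by simpa using h2) hmt
      · have hD : {x | ¬ContinuousAt g x}.Countable := hg.countable_not_continuousAt
        have hD2 : ({t : ℝ | r * t ∈ {x | ¬ContinuousAt g x}}).Countable := by
          have hinj : Function.Injective (fun t : ℝ => r * t) :=
            fun a b hab => mul_left_cancel₀ h.ne' hab
          exact Set.Countable.preimage hD hinj
        have hzero : MeasureTheory.volume {t : ℝ | r * t ∈ {x | ¬ContinuousAt g x}} = 0 :=
          hD2.measure_zero _
        rw [MeasureTheory.ae_iff]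
        apply MeasureTheory.measure_mono_null _ hzero
        intro t ht
        simp only [Set.mem_setOf_eq] at ht ⊢
        intro hc
        apply ht
        intro _
        exact ContinuousAt.comp (by simpa using hc) (by fun_prop : ContinuousAt (fun x : ℝ => x * t) r)
  refine ⟨fun r => r + γ' r, ⟨?_, ?_, ?_⟩, ?_⟩
  · intro r hr
    exact (continuousAt_id.add (hcont' r hr)).continuousWithinAt
  · intro r1 hr1 r2 hr2 h12
    have := hmono r1 r2 hr1 h12.le
    simp only []
    linarith
  · simp only [hγ', zero_mul]
    rw [h0 0 le_rfl]
    simp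
  · intro r hr
    have h1 := hle r hr
    have h2 : (0:ℝ) ≤ r := hr
    simp only []
    linarith


set_option maxHeartbeats 2000000 in
/-- Theorem 1 (robust asymptotic stability of the stability filter). -/
theorem stability_filter_robust_asymptotic_stability
    {nx nu nw N : ℕ}
    (f : Vec nx → Vec nu → Vec nw → Vec nx)
    (l : Vec nx → Vec nu → ℝ) (m : Vec nx → ℝ)
    (Ω : Fin (N + 1) → Set (Vec nx × Vec nu)) (Zf : Set (Vec nx))
    (W : Set (Vec nw))
    (ξc : Vec nx → (Fin (N + 1) → Vec nu) → Vec nw → Fin (N + 1) → Vec nu)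
    (ξf : Vec nx → (Fin (N + 1) → Vec nu) → Fin (N + 1) → Vec nu)
    (ρ : ℝ) (hρ : ρ ∈ Set.Ico (0 : ℝ) 1)
    -- setting
    (hW : IsCompact W) (hW0 : (0 : Vec nw) ∈ W)
    (hΩ : ∀ k, IsCompact (Ω k)) (hZfc : IsCompact Zf)
    (hZf0 : (0 : Vec nx) ∈ interior Zf)
    (hf0 : f 0 0 0 = 0)
    -- Assumption 1 (continuity)
    (hfc : Continuous fun p : Vec nx × Vec nu × Vec nw => f p.1 p.2.1 p.2.2)
    (hlc : Continuous fun p : Vec nx × Vec nu => l p.1 p.2)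
    (hmc : Continuous m)
    (hl0 : l 0 0 = 0) (hm0 : m 0 = 0) (hmnn : ∀ x, 0 ≤ m x)
    -- Assumption 2 (lower-bounded stage cost)
    (αl : ℝ → ℝ) (hαl : ClassKInf αl)
    (hlb : ∀ k, ∀ p ∈ Ω k, αl ‖p‖ ≤ l p.1 p.2)
    -- continuity of the candidate generating function
    (hξc : Continuous fun p : Vec nx × (Fin (N + 1) → Vec nu) × Vec nw =>
      ξc p.1 p.2.1 p.2.2)
    -- Assumption 3 (i): recursive feasibility of ξ_c
    (hA3i : ∀ p ∈ Fbar f l m Ω Zf ξc ρ, ∀ w ∈ W,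
      (f p.1 (p.2 0) w, ξc (f p.1 (p.2 0) w) p.2 w) ∈ Fbar f l m Ω Zf ξc ρ)
    -- Assumption 3 (ii): candidate nominal improvement
    (hA3ii : ∀ p ∈ Fbar f l m Ω Zf ξc ρ,
      Vcost f l m (f p.1 (p.2 0) 0) (ξc (f p.1 (p.2 0) 0) p.2 0) ≤
        Vcost f l m p.1 p.2 - αl ‖(p.1, p.2 0)‖)
    -- Assumption 3 (iii): recursive feasibility of ξ_f
    (hA3iii : ∀ (xp : Vec nx) (v : Fin (N + 1) → Vec nu), ∀ w ∈ W,
      xp ∈ Zf → (xp, ξc xp v w) ∈ Fbar f l m Ω Zf ξc ρ →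
        (xp, ξf xp v) ∈ Fbar f l m Ω Zf ξc ρ)
    -- Assumption 3 (iv): terminal cost
    (hA3iv : ∀ x ∈ Zf, ∀ u, Vcost f l m x (ξf x u) ≤ m x)
    -- property (v)
    (hA3v : ∀ p ∈ Fbar f l m Ω Zf ξc ρ, p.1 ∈ Zf → Vcost f l m p.1 p.2 ≤ m p.1)
    -- property (vi)
    (hA3vi : ∀ p ∈ Fbar f l m Ω Zf ξc ρ, ∀ v ∈ Useq f l m Ω Zf ξc ρ p.1 p.2,
      (p.1, v) ∈ Fbar f l m Ω Zf ξc ρ)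
    (h00 : ((0 : Vec nx), fun _ : Fin (N + 1) => (0 : Vec nu)) ∈ Fbar f l m Ω Zf ξc ρ)
    :
    (∀ z ∈ Fbar f l m Ω Zf ξc ρ, ∀ w ∈ W,
        Hmap f l m Ω Zf ξc ξf ρ z w ⊆ Fbar f l m Ω Zf ξc ρ) ∧
    ∃ β γ, ClassKL β ∧ ClassK γ ∧
      ∀ z ∈ Fbar f l m Ω Zf ξc ρ, ∀ wseq : ℕ → Vec nw, (∀ i, wseq i ∈ W) →
        ∀ ψ : ℕ → Vec nx × (Fin (N + 1) → Vec nu), ψ 0 = z →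
          (∀ k, ψ (k + 1) ∈ Hmap f l m Ω Zf ξc ξf ρ (ψ k) (wseq k)) →
          ∀ k, ‖ψ k‖ ≤ β ‖z‖ k + γ (⨆ i, ‖wseq i‖) := by
  obtain ⟨hρ0, hρ1⟩ := hρ
  obtain ⟨⟨hαlc, hαlsm, hαl0⟩, hαlTop⟩ := hαl
  have hαlmono : MonotoneOn αl (Set.Ici 0) := hαlsm.monotoneOn
  have hαlnn : ∀ s, 0 ≤ s → 0 ≤ αl s := by
    intro s hs
    rw [← hαl0]
    exact hαlmono (le_refl (0:ℝ)) hs hs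
  set K := Fbar f l m Ω Zf ξc ρ with hK
  set V : (Vec nx × (Fin (N + 1) → Vec nu)) → ℝ := fun z => Vcost f l m z.1 z.2 with hV
  have hVcont : Continuous V := Vcost_continuous f l m hfc hlc hmc
  obtain ⟨R, hRpos, hRbound⟩ := Feasible_bound f Ω Zf hΩ
  have hKnorm : ∀ z ∈ K, ‖z‖ ≤ R := fun z hz => hRbound z.1 z.2 hz.1
  have hKlower : ∀ z ∈ K, αl ‖z‖ ≤ V z := fun z hz =>
    Vcost_lower f l m Ω Zf hmnn αl hαlmono hαl0 hlb z.1 z.2 hz.1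
  have hVnn : ∀ z ∈ K, 0 ≤ V z := fun z hz =>
    le_trans (hαlnn _ (norm_nonneg _)) (hKlower z hz)
  have hV00 : V (0, fun _ => 0) = 0 := Vcost_zero f l m hf0 hl0 hm0
  -- warmstart cost bounds
  have hws_c : ∀ (x : Vec nx) (v : Fin (N+1) → Vec nu) (w : Vec nw),
      V (x, warmstart f l m Zf ξc ξf x v w) ≤ V (x, ξc x v w) := by
    intro x v w
    show Vcost f l m x (warmstart f l m Zf ξc ξf x v w) ≤ _
    unfold warmstart
    split_ifs with h
    · exact h.2
    · exact le_rfl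
  have hws_f : ∀ (x : Vec nx) (v : Fin (N+1) → Vec nu) (w : Vec nw), x ∈ Zf →
      V (x, warmstart f l m Zf ξc ξf x v w) ≤ Vcost f l m x (ξf x v) := by
    intro x v w hx
    show Vcost f l m x (warmstart f l m Zf ξc ξf x v w) ≤ _
    unfold warmstart
    split_ifs with h
    · exact le_rfl
    · push_neg at h
      exact (h hx).le
  -- RPI
  have hRPI : ∀ z ∈ K, ∀ w ∈ W, Hmap f l m Ω Zf ξc ξf ρ z w ⊆ K := by
    intro z hz w hw zp hzp
    obtain ⟨v, hv, rfl⟩ := hzp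
    have hxv : (z.1, v) ∈ K := hA3vi z hz v hv
    have hc : (f z.1 (v 0) w, ξc (f z.1 (v 0) w) v w) ∈ K := hA3i (z.1, v) hxv w hw
    show (f z.1 (v 0) w, warmstart f l m Zf ξc ξf (f z.1 (v 0) w) v w) ∈ K
    unfold warmstart
    split_ifs with h
    · exact hA3iii (f z.1 (v 0) w) v w hw h.1 hc
    · exact hc
  refine ⟨hRPI, ?_⟩
  -- inverse of αl
  have hsurj : ∀ t, 0 ≤ t → ∃ s, 0 ≤ s ∧ αl s = t := by
    intro t ht
    obtain ⟨b, hb, hb0⟩ := ((hαlTop.eventually_ge_atTop t).and (eventually_ge_atTop (0:ℝ))).exists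
    have hIcc : Set.Icc (αl 0) (αl b) ⊆ αl '' Set.Icc 0 b :=
      intermediate_value_Icc hb0 (hαlc.mono (fun x hx => hx.1))
    have hmem : t ∈ Set.Icc (αl 0) (αl b) := by rw [hαl0]; exact ⟨ht, hb⟩
    obtain ⟨s, hs, hst⟩ := hIcc hmem
    exact ⟨s, hs.1, hst⟩
  set αinv : ℝ → ℝ := fun t => if h : ∃ s, 0 ≤ s ∧ αl s = t then h.choose else 0 with hαinvdef
  have hαinv_spec : ∀ t, 0 ≤ t → 0 ≤ αinv t ∧ αl (αinv t) = t := by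
    intro t ht
    have h := hsurj t ht
    simp only [hαinvdef, dif_pos h]
    exact ⟨h.choose_spec.1, h.choose_spec.2⟩
  have hαinv_ge : ∀ s t, 0 ≤ s → 0 ≤ t → αl s ≤ t → s ≤ αinv t := by
    intro s t hs ht hle
    obtain ⟨h1, h2⟩ := hαinv_spec t ht
    by_contra hlt
    push_neg at hlt
    have := hαlsm h1 hs hlt
    rw [h2] at this; linarith
  have hαinv_le : ∀ t ε, 0 ≤ t → 0 ≤ ε → t ≤ αl ε → αinv t ≤ ε := by
    intro t ε ht hε hle
    obtain ⟨h1, h2⟩ := hαinv_spec t ht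
    by_contra hlt
    push_neg at hlt
    have := hαlsm hε h1 hlt
    rw [h2] at this; linarith
  have hαinv_nn : ∀ t, 0 ≤ t → 0 ≤ αinv t := fun t ht => (hαinv_spec t ht).1
  have hαinv_mono : ∀ t1 t2, 0 ≤ t1 → t1 ≤ t2 → αinv t1 ≤ αinv t2 := by
    intro t1 t2 h1 h12
    have h2 : (0:ℝ) ≤ t2 := h1.trans h12
    exact hαinv_le t1 (αinv t2) h1 (hαinv_nn t2 h2) (by rw [(hαinv_spec t2 h2).2]; exact h12)
  -- terminal ball inside Zf
  obtain ⟨a, hapos, haZf⟩ : ∃ a, 0 < a ∧ Metric.closedBall (0 : Vec nx) a ⊆ Zf := by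
    obtain ⟨ε, hε, hball⟩ := Metric.isOpen_iff.1 isOpen_interior 0 hZf0
    refine ⟨ε/2, by linarith, ?_⟩
    intro y hy
    apply interior_subset
    apply hball
    rw [Metric.mem_closedBall] at hy
    rw [Metric.mem_ball]
    linarith
  -- compact ball and Vmax
  have hBcomp : IsCompact (Metric.closedBall (0 : Vec nx × (Fin (N + 1) → Vec nu)) R) :=
    isCompact_closedBall _ _
  have hKB : ∀ z ∈ K, z ∈ Metric.closedBall (0 : Vec nx × (Fin (N + 1) → Vec nu)) R := by
    intro z hz
    rw [Metric.mem_closedBall, dist_zero_right]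
    exact hKnorm z hz
  set Vmax := sSup (V '' Metric.closedBall 0 R) with hVmaxdef
  have hVmax_le : ∀ z ∈ K, V z ≤ Vmax := fun z hz =>
    le_csSup (hBcomp.image hVcont).bddAbove (Set.mem_image_of_mem _ (hKB z hz))
  have hVmax_nn : 0 ≤ Vmax := by
    have h0B : ((0, fun _ => 0) : Vec nx × (Fin (N + 1) → Vec nu)) ∈
        Metric.closedBall (0 : Vec nx × (Fin (N + 1) → Vec nu)) R := by
      rw [Metric.mem_closedBall, dist_zero_right]
      rw [show ((0, fun _ => 0) : Vec nx × (Fin (N + 1) → Vec nu)) = 0 from rfl, norm_zero]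
      exact hRpos.le
    have := le_csSup (hBcomp.image hVcont).bddAbove (Set.mem_image_of_mem V h0B)
    rw [hV00] at this
    exact this
  -- one-step candidate cost g and modulus Δ
  set g : (Vec nx × (Fin (N + 1) → Vec nu)) → Vec nw → ℝ := fun z w =>
    V (f z.1 (z.2 0) w, ξc (f z.1 (z.2 0) w) z.2 w) with hgdef
  have hgcont : Continuous fun p : (Vec nx × (Fin (N + 1) → Vec nu)) × Vec nw =>
      g p.1 p.2 := by
    have hx : Continuous fun p : (Vec nx × (Fin (N + 1) → Vec nu)) × Vec nw =>
        f p.1.1 (p.1.2 0) p.2 := by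
      have h2 : Continuous fun p : (Vec nx × (Fin (N + 1) → Vec nu)) × Vec nw =>
          ((p.1.1, (p.1.2 0, p.2)) : Vec nx × Vec nu × Vec nw) :=
        (continuous_fst.fst).prodMk
          (((continuous_apply (0 : Fin (N+1))).comp continuous_fst.snd).prodMk continuous_snd)
      exact hfc.comp h2
    have hxi : Continuous fun p : (Vec nx × (Fin (N + 1) → Vec nu)) × Vec nw =>
        ξc (f p.1.1 (p.1.2 0) p.2) p.1.2 p.2 := by
      have h2 : Continuous fun p : (Vec nx × (Fin (N + 1) → Vec nu)) × Vec nw =>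
          ((f p.1.1 (p.1.2 0) p.2, (p.1.2, p.2)) :
            Vec nx × (Fin (N + 1) → Vec nu) × Vec nw) :=
        hx.prodMk (continuous_fst.snd.prodMk continuous_snd)
      exact hξc.comp h2
    have h3 : Continuous fun p : (Vec nx × (Fin (N + 1) → Vec nu)) × Vec nw =>
        ((f p.1.1 (p.1.2 0) p.2, ξc (f p.1.1 (p.1.2 0) p.2) p.1.2 p.2) :
          Vec nx × (Fin (N + 1) → Vec nu)) := hx.prodMk hxi
    exact hVcont.comp h3
  set Δ : ℝ → ℝ := fun s =>
    sSup (insert 0 {d | ∃ z ∈ K, ∃ w ∈ W, ‖w‖ ≤ s ∧ d = g z w - g z 0}) with hΔdef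
  have hq : Continuous fun p : (Vec nx × (Fin (N + 1) → Vec nu)) × Vec nw =>
      g p.1 p.2 - g p.1 0 :=
    hgcont.sub (hgcont.comp (continuous_fst.prodMk continuous_const))
  obtain ⟨Dmax, hDmax⟩ : ∃ D, ∀ z ∈ Metric.closedBall
      (0 : Vec nx × (Fin (N + 1) → Vec nu)) R, ∀ w ∈ W, g z w - g z 0 ≤ D := by
    obtain ⟨D, hD⟩ := ((hBcomp.prod hW).image hq).bddAbove
    refine ⟨D, fun z hz w hw => ?_⟩
    exact hD (Set.mem_image_of_mem _ (Set.mk_mem_prod hz hw))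
  have hΔbdd : ∀ s, BddAbove
      (insert (0:ℝ) {d | ∃ z ∈ K, ∃ w ∈ W, ‖w‖ ≤ s ∧ d = g z w - g z 0}) := by
    intro s
    refine ⟨max Dmax 0, ?_⟩
    rintro d (rfl | ⟨z, hz, w, hw, hws, rfl⟩)
    · exact le_max_right _ _
    · exact (hDmax z (hKB z hz) w hw).trans (le_max_left _ _)
  have hΔnn : ∀ s, 0 ≤ Δ s := fun s => le_csSup (hΔbdd s) (Set.mem_insert 0 _)
  have hΔmono : Monotone Δ := by
    intro s1 s2 h
    apply csSup_le_csSup (hΔbdd s2) ⟨0, Set.mem_insert 0 _⟩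
    rintro d (rfl | ⟨z, hz, w, hw, hws, rfl⟩)
    · exact Set.mem_insert 0 _
    · exact Set.mem_insert_of_mem _ ⟨z, hz, w, hw, hws.trans h, rfl⟩
  have hΔle : ∀ z ∈ K, ∀ w ∈ W, ∀ s, ‖w‖ ≤ s → g z w - g z 0 ≤ Δ s := by
    intro z hz w hw s hws
    exact le_csSup (hΔbdd s) (Set.mem_insert_of_mem _ ⟨z, hz, w, hw, hws, rfl⟩)
  have hΔsmall : ∀ ε, 0 < ε → ∃ δ, 0 < δ ∧ Δ δ ≤ ε := by
    intro ε hε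
    set Cset := (Metric.closedBall (0 : Vec nx × (Fin (N + 1) → Vec nu)) R ×ˢ W) ∩
      (fun p : (Vec nx × (Fin (N + 1) → Vec nu)) × Vec nw => g p.1 p.2 - g p.1 0) ⁻¹'
        (Set.Ici ε) with hCdef
    have hCcomp : IsCompact Cset :=
      (hBcomp.prod hW).inter_right (isClosed_Ici.preimage hq)
    by_cases hne : Cset.Nonempty
    · obtain ⟨p0, hp0, hmin⟩ := hCcomp.exists_isMinOn hne
        ((continuous_norm.comp continuous_snd).continuousOn)
      have hp0pos : 0 < ‖p0.2‖ := by
        rcases (norm_nonneg p0.2).lt_or_eq with h | h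
        · exact h
        · exfalso
          have hz0 : p0.2 = 0 := by rwa [eq_comm, norm_eq_zero] at h
          have := hp0.2
          simp only [Set.mem_preimage, hz0, Set.mem_Ici] at this
          simp at this
          linarith
      refine ⟨‖p0.2‖ / 2, by positivity, ?_⟩
      apply Real.sSup_le _ hε.le
      rintro d (rfl | ⟨z, hz, w, hw, hws, rfl⟩)
      · exact hε.le
      · by_contra hgt
        push_neg at hgt
        have hmem : ((z, w) : (Vec nx × (Fin (N + 1) → Vec nu)) × Vec nw) ∈ Cset :=
          ⟨Set.mk_mem_prod (hKB z hz) hw, by simp only [Set.mem_preimage, Set.mem_Ici]; linarith⟩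
        have := hmin hmem
        simp only [Set.mem_setOf_eq] at this
        change ‖p0.2‖ ≤ ‖w‖ at this
        linarith
    · refine ⟨1, one_pos, ?_⟩
      apply Real.sSup_le _ hε.le
      rintro d (rfl | ⟨z, hz, w, hw, hws, rfl⟩)
      · exact hε.le
      · by_contra hgt
        push_neg at hgt
        exact hne ⟨(z, w), Set.mk_mem_prod (hKB z hz) hw,
          by simp only [Set.mem_preimage, Set.mem_Ici]; linarith⟩
  -- ν : local upper bound modulus of V on K
  set ν : ℝ → ℝ := fun t => sSup (insert 0 {c | ∃ z ∈ K, ‖z‖ ≤ t ∧ c = V z}) with hνdef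
  have hνbdd : ∀ t, BddAbove (insert (0:ℝ) {c | ∃ z ∈ K, ‖z‖ ≤ t ∧ c = V z}) := by
    intro t
    refine ⟨max Vmax 0, ?_⟩
    rintro c (rfl | ⟨z, hz, -, rfl⟩)
    · exact le_max_right _ _
    · exact (hVmax_le z hz).trans (le_max_left _ _)
  have hνnn : ∀ t, 0 ≤ ν t := fun t => le_csSup (hνbdd t) (Set.mem_insert 0 _)
  have hνle : ∀ z ∈ K, ∀ t, ‖z‖ ≤ t → V z ≤ ν t := fun z hz t ht =>
    le_csSup (hνbdd t) (Set.mem_insert_of_mem _ ⟨z, hz, ht, rfl⟩)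
  have hνmono : Monotone ν := by
    intro t1 t2 h
    apply csSup_le_csSup (hνbdd t2) ⟨0, Set.mem_insert 0 _⟩
    rintro c (rfl | ⟨z, hz, hzt, rfl⟩)
    · exact Set.mem_insert 0 _
    · exact Set.mem_insert_of_mem _ ⟨z, hz, hzt.trans h, rfl⟩
  have hνsmall : ∀ ε, 0 < ε → ∃ δ, 0 < δ ∧ ν δ ≤ ε := by
    intro ε hε
    have hc : ContinuousAt V 0 := hVcont.continuousAt
    rw [Metric.continuousAt_iff] at hc
    obtain ⟨δ, hδ, hδ2⟩ := hc ε hε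
    refine ⟨δ / 2, by positivity, ?_⟩
    apply Real.sSup_le _ hε.le
    rintro c (rfl | ⟨z, hz, hzt, rfl⟩)
    · exact hε.le
    · have hd : dist z 0 < δ := by
        rw [dist_zero_right]; linarith
      have := hδ2 hd
      have hV0 : V 0 = 0 := hV00
      rw [Real.dist_eq, hV0, sub_zero] at this
      exact (le_abs_self _).trans this.le
  -- μ : terminal cost modulus
  set μ : ℝ → ℝ := fun s => sSup (insert 0 {c | ∃ y : Vec nx, ‖y‖ ≤ min s a ∧ c = m y})
    with hμdef
  obtain ⟨Mm, hMm⟩ : ∃ Mm, ∀ y : Vec nx, ‖y‖ ≤ a → m y ≤ Mm := by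
    obtain ⟨D, hD⟩ := ((isCompact_closedBall (0 : Vec nx) a).image hmc).bddAbove
    refine ⟨D, fun y hy => ?_⟩
    exact hD (Set.mem_image_of_mem _ (by rwa [Metric.mem_closedBall, dist_zero_right]))
  have hμbdd : ∀ s, BddAbove (insert (0:ℝ) {c | ∃ y : Vec nx, ‖y‖ ≤ min s a ∧ c = m y}) := by
    intro s
    refine ⟨max Mm 0, ?_⟩
    rintro c (rfl | ⟨y, hy, rfl⟩)
    · exact le_max_right _ _
    · exact (hMm y (hy.trans (min_le_right _ _))).trans (le_max_left _ _)
  have hμnn : ∀ s, 0 ≤ μ s := fun s => le_csSup (hμbdd s) (Set.mem_insert 0 _)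
  have hμmono : Monotone μ := by
    intro s1 s2 h
    apply csSup_le_csSup (hμbdd s2) ⟨0, Set.mem_insert 0 _⟩
    rintro c (rfl | ⟨y, hy, rfl⟩)
    · exact Set.mem_insert 0 _
    · exact Set.mem_insert_of_mem _ ⟨y, hy.trans (min_le_min_right _ h), rfl⟩
  have hμle : ∀ y : Vec nx, ∀ s, ‖y‖ ≤ s → ‖y‖ ≤ a → m y ≤ μ s := fun y s h1 h2 =>
    le_csSup (hμbdd s) (Set.mem_insert_of_mem _ ⟨y, le_min h1 h2, rfl⟩)
  have hμsmall : ∀ ε, 0 < ε → ∃ δ, 0 < δ ∧ δ ≤ a ∧ μ δ ≤ ε := by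
    intro ε hε
    have hc : ContinuousAt m 0 := hmc.continuousAt
    rw [Metric.continuousAt_iff] at hc
    obtain ⟨δ, hδ, hδ2⟩ := hc ε hε
    refine ⟨min (δ / 2) a, lt_min (by positivity) hapos, min_le_right _ _, ?_⟩
    apply Real.sSup_le _ hε.le
    rintro c (rfl | ⟨y, hy, rfl⟩)
    · exact hε.le
    · have hd : dist y 0 < δ := by
        rw [dist_zero_right]
        have := hy.trans (min_le_left _ _)
        have h2 := this.trans (min_le_left (δ/2) a)
        linarith
      have := hδ2 hd
      rw [Real.dist_eq, hm0, sub_zero] at this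
      exact (le_abs_self _).trans this.le
  -- p : level-to-radius function
  set p : ℝ → ℝ := fun t => sSup (insert 0 {s | s ≤ a ∧ μ s ≤ t / 2}) with hpdef
  have hpbdd : ∀ t, BddAbove (insert (0:ℝ) {s | s ≤ a ∧ μ s ≤ t / 2}) := by
    intro t
    refine ⟨max a 0, ?_⟩
    rintro s (rfl | ⟨h1, -⟩)
    · exact le_max_right _ _
    · exact h1.trans (le_max_left _ _)
  have hpnn : ∀ t, 0 ≤ p t := fun t => le_csSup (hpbdd t) (Set.mem_insert 0 _)
  have hpa : ∀ t, p t ≤ a := by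
    intro t
    apply Real.sSup_le _ hapos.le
    rintro s (rfl | ⟨h1, -⟩)
    · exact hapos.le
    · exact h1
  have hpmono : Monotone p := by
    intro t1 t2 h
    apply csSup_le_csSup (hpbdd t2) ⟨0, Set.mem_insert 0 _⟩
    rintro s (rfl | ⟨h1, h2⟩)
    · exact Set.mem_insert 0 _
    · exact Set.mem_insert_of_mem _ ⟨h1, h2.trans (by linarith)⟩
  have hppos : ∀ t, 0 < t → 0 < p t := by
    intro t ht
    obtain ⟨δ, hδ1, hδ2, hδ3⟩ := hμsmall (t / 2) (by positivity)
    exact lt_of_lt_of_le hδ1 (le_csSup (hpbdd t) (Set.mem_insert_of_mem _ ⟨hδ2, hδ3⟩))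
  have hpkey : ∀ t, 0 < t → μ (p t / 2) ≤ t / 2 := by
    intro t ht
    have h2 : p t / 2 < p t := by
      have := hppos t ht; linarith
    obtain ⟨s', hs', hlt⟩ := exists_lt_of_lt_csSup ⟨0, Set.mem_insert 0 _⟩ h2
    rcases hs' with rfl | ⟨hs'a, hs'μ⟩
    · exfalso
      have := hpnn t; linarith
    · exact (hμmono hlt.le).trans hs'μ
  -- α3 : decrease rate as function of the Lyapunov level
  set α3 : ℝ → ℝ := fun t => (1 - ρ) * min (αl (p t / 2)) t with hα3def
  have hρpos : 0 < 1 - ρ := by linarith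
  have hα3mono : Monotone α3 := by
    intro t1 t2 h
    apply mul_le_mul_of_nonneg_left _ hρpos.le
    apply min_le_min _ h
    exact hαlmono (Set.mem_Ici.2 (by have := hpnn t1; linarith))
      (Set.mem_Ici.2 (by have := hpnn t2; linarith)) (by have := hpmono h; linarith)
  have hα3pos : ∀ t, 0 < t → 0 < α3 t := by
    intro t ht
    apply mul_pos hρpos
    apply lt_min _ ht
    have hp2 : 0 < p t / 2 := by have := hppos t ht; linarith
    have := hαlsm (Set.mem_Ici.2 le_rfl) (Set.mem_Ici.2 hp2.le) hp2
    rw [hαl0] at this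
    exact this
  have hα3nn : ∀ t, 0 ≤ t → 0 ≤ α3 t := by
    intro t ht
    apply mul_nonneg hρpos.le
    exact le_min (hαlnn _ (by have := hpnn t; linarith)) ht
  have hα3ub : ∀ t, 0 ≤ t → α3 t ≤ t := by
    intro t ht
    calc (1 - ρ) * min (αl (p t / 2)) t ≤ 1 * min (αl (p t / 2)) t := by
          apply mul_le_mul_of_nonneg_right (by linarith)
          exact le_min (hαlnn _ (by have := hpnn t; linarith)) ht
      _ = min (αl (p t / 2)) t := one_mul _
      _ ≤ t := min_le_right _ _
  -- p2, ζ : ultimate bound functions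
  set p2 : ℝ → ℝ := fun h => sSup (insert 0 {t | t ≤ Vmax ∧ α3 t ≤ 2 * h}) with hp2def
  have hp2bdd : ∀ h, BddAbove (insert (0:ℝ) {t | t ≤ Vmax ∧ α3 t ≤ 2 * h}) := by
    intro h
    refine ⟨max Vmax 0, ?_⟩
    rintro t (rfl | ⟨h1, -⟩)
    · exact le_max_right _ _
    · exact h1.trans (le_max_left _ _)
  have hp2nn : ∀ h, 0 ≤ p2 h := fun h => le_csSup (hp2bdd h) (Set.mem_insert 0 _)
  have hp2mono : Monotone p2 := by
    intro h1 h2 h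
    apply csSup_le_csSup (hp2bdd h2) ⟨0, Set.mem_insert 0 _⟩
    rintro t (rfl | ⟨ha1, ha2⟩)
    · exact Set.mem_insert 0 _
    · exact Set.mem_insert_of_mem _ ⟨ha1, ha2.trans (by linarith)⟩
  have hp2le : ∀ h t, t ≤ Vmax → α3 t ≤ 2 * h → t ≤ p2 h := fun h t h1 h2 =>
    le_csSup (hp2bdd h) (Set.mem_insert_of_mem _ ⟨h1, h2⟩)
  have hp2small : ∀ ε, 0 < ε → ∀ h, 2 * h < α3 ε → p2 h ≤ ε := by
    intro ε hε h hh
    apply Real.sSup_le _ hε.le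
    rintro t (rfl | ⟨h1, h2⟩)
    · exact hε.le
    · by_contra hgt
      push_neg at hgt
      have := hα3mono hgt.le
      linarith
  set ζ : ℝ → ℝ := fun h => p2 h + h with hζdef
  -- φ : one-step decrease envelope
  set φ : ℝ → ℝ := fun t =>
    sSup (insert 0 {c | ∃ τ, 0 ≤ τ ∧ τ ≤ t ∧ c = max (τ - α3 τ / 2) 0}) with hφdef
  have hφbdd : ∀ t, BddAbove
      (insert (0:ℝ) {c | ∃ τ, 0 ≤ τ ∧ τ ≤ t ∧ c = max (τ - α3 τ / 2) 0}) := by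
    intro t
    refine ⟨max t 0, ?_⟩
    rintro c (rfl | ⟨τ, hτ0, hτt, rfl⟩)
    · exact le_max_right _ _
    · apply max_le _ (le_max_right _ _)
      have := hα3nn τ hτ0
      have := le_max_left t 0
      linarith
  have hφnn : ∀ t, 0 ≤ φ t := fun t => le_csSup (hφbdd t) (Set.mem_insert 0 _)
  have hφmono : Monotone φ := by
    intro t1 t2 h
    apply csSup_le_csSup (hφbdd t2) ⟨0, Set.mem_insert 0 _⟩
    rintro c (rfl | ⟨τ, hτ0, hτt, rfl⟩)
    · exact Set.mem_insert 0 _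
    · exact Set.mem_insert_of_mem _ ⟨τ, hτ0, hτt.trans h, rfl⟩
  have hφle_self : ∀ t, 0 ≤ t → φ t ≤ t := by
    intro t ht
    apply Real.sSup_le _ ht
    rintro c (rfl | ⟨τ, hτ0, hτt, rfl⟩)
    · exact ht
    · apply max_le _ ht
      have := hα3nn τ hτ0
      linarith
  have hφge : ∀ t, 0 ≤ t → max (t - α3 t / 2) 0 ≤ φ t := fun t ht =>
    le_csSup (hφbdd t) (Set.mem_insert_of_mem _ ⟨t, ht, le_rfl, rfl⟩)
  have hφdecay : ∀ t, 0 < t → φ t ≤ t - min (t / 2) (α3 (t / 2) / 2) := by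
    intro t ht
    have hB : t / 2 ≤ t - min (t / 2) (α3 (t / 2) / 2) := by
      have := min_le_left (t / 2) (α3 (t / 2) / 2); linarith
    apply Real.sSup_le _ (by linarith)
    rintro c (rfl | ⟨τ, hτ0, hτt, rfl⟩)
    · linarith
    · rcases le_or_gt τ (t / 2) with hc | hc
      · apply max_le _ (by linarith)
        have := hα3nn τ hτ0
        linarith
      · apply max_le _ (by linarith)
        have h1 : α3 (t / 2) ≤ α3 τ := hα3mono hc.le
        have h2 : min (t / 2) (α3 (t / 2) / 2) ≤ α3 (t / 2) / 2 := min_le_right _ _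
        linarith
  -- per-step inequality
  have hstep : ∀ z ∈ K, ∀ w ∈ W, ∀ zp ∈ Hmap f l m Ω Zf ξc ξf ρ z w, ∀ s, ‖w‖ ≤ s →
      zp ∈ K ∧ V zp ≤ V z - α3 (V z) + Δ s := by
    intro z hz w hw zp hzp s hs
    refine ⟨hRPI z hz w hw hzp, ?_⟩
    obtain ⟨v, hv, hzpe⟩ := hzp
    have hxvK : (z.1, v) ∈ K := hA3vi z hz v hv
    have h1 : V zp ≤ g (z.1, v) w := by
      rw [hzpe]
      exact hws_c (f z.1 (v 0) w) v w
    have h2 : g (z.1, v) 0 ≤ V z - (1 - ρ) * l z.1 (z.2 0) := hv.2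
    have h3 : g (z.1, v) w - g (z.1, v) 0 ≤ Δ s := hΔle _ hxvK w hw s hs
    have hfeasz : Feasible f Ω Zf z.1 z.2 := hz.1
    have hl1 : αl ‖(z.1, z.2 0)‖ ≤ l z.1 (z.2 0) := hlb 0 _ (hfeasz.1 0)
    have hxle : ‖z.1‖ ≤ ‖(z.1, z.2 0)‖ := by
      rw [Prod.norm_def]; exact le_max_left _ _
    have hl2 : αl ‖z.1‖ ≤ l z.1 (z.2 0) :=
      le_trans (hαlmono (Set.mem_Ici.2 (norm_nonneg _))
        (Set.mem_Ici.2 (norm_nonneg _)) hxle) hl1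
    have hlnn : 0 ≤ l z.1 (z.2 0) := (hαlnn _ (norm_nonneg _)).trans hl2
    have hVz_nn : 0 ≤ V z := hVnn z hz
    rcases eq_or_lt_of_le hVz_nn with hV0' | hVpos
    · have hα30 : α3 (V z) = 0 := by
        rw [← hV0']
        show (1 - ρ) * min (αl (p 0 / 2)) 0 = 0
        rw [min_eq_right (hαlnn _ (by have := hpnn 0; linarith))]
        ring
      have hmul : 0 ≤ (1 - ρ) * l z.1 (z.2 0) := mul_nonneg hρpos.le hlnn
      rw [hα30]
      linarith
    · have hx_big : p (V z) / 2 < ‖z.1‖ := by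
        by_contra hle2
        push_neg at hle2
        have hxa : ‖z.1‖ ≤ a := hle2.trans (by have := hpa (V z); linarith)
        have hxZf : z.1 ∈ Zf := haZf (by rwa [Metric.mem_closedBall, dist_zero_right])
        have hVm : V z ≤ m z.1 := hA3v z hz hxZf
        have hmμ : m z.1 ≤ μ (p (V z) / 2) := hμle z.1 _ hle2 hxa
        have := hpkey (V z) hVpos
        linarith
      have hα3le2 : α3 (V z) ≤ (1 - ρ) * l z.1 (z.2 0) := by
        have ha1 : α3 (V z) ≤ (1 - ρ) * αl (p (V z) / 2) :=
          mul_le_mul_of_nonneg_left (min_le_left _ _) hρpos.le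
        have ha2 : αl (p (V z) / 2) ≤ αl ‖z.1‖ :=
          hαlmono (Set.mem_Ici.2 (by have := hpnn (V z); linarith))
            (Set.mem_Ici.2 (norm_nonneg _)) hx_big.le
        calc α3 (V z) ≤ (1 - ρ) * αl (p (V z) / 2) := ha1
          _ ≤ (1 - ρ) * αl ‖z.1‖ := mul_le_mul_of_nonneg_left ha2 hρpos.le
          _ ≤ (1 - ρ) * l z.1 (z.2 0) := mul_le_mul_of_nonneg_left hl2 hρpos.le
      linarith
  -- iterate properties of φ
  have hφit_nn : ∀ c, 0 ≤ c → ∀ k, 0 ≤ φ^[k] c := by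
    intro c hc k
    induction k with
    | zero => simpa using hc
    | succ k ih =>
      rw [Function.iterate_succ_apply']
      exact hφnn _
  have hφit_dec : ∀ c, 0 ≤ c → ∀ k, φ^[k + 1] c ≤ φ^[k] c := by
    intro c hc k
    rw [Function.iterate_succ_apply']
    exact hφle_self _ (hφit_nn c hc k)
  have hφit_anti : ∀ c, 0 ≤ c → Antitone (fun k => φ^[k] c) := fun c hc =>
    antitone_nat_of_succ_le (hφit_dec c hc)
  have hφit_le : ∀ c, 0 ≤ c → ∀ k, φ^[k] c ≤ c := fun c hc k =>
    hφit_anti c hc (Nat.zero_le k)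
  have htend : ∀ c, 0 ≤ c → ∀ ε, 0 < ε → ∃ K0 : ℕ, ∀ k ≥ K0, φ^[k] c ≤ ε := by
    intro c hc ε hε
    suffices h : ∃ k, φ^[k] c ≤ ε by
      obtain ⟨k, hk⟩ := h
      exact ⟨k, fun k' hk' => (hφit_anti c hc hk').trans hk⟩
    by_contra hcon
    push_neg at hcon
    set d := min (ε / 2) (α3 (ε / 2) / 2) with hd
    have hdpos : 0 < d := lt_min (by positivity) (by have := hα3pos (ε/2) (by positivity); linarith)
    have hdrop : ∀ k, φ^[k + 1] c ≤ φ^[k] c - d := by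
      intro k
      have hgt : ε < φ^[k] c := hcon k
      have h1 : φ (φ^[k] c) ≤ φ^[k] c - min (φ^[k] c / 2) (α3 (φ^[k] c / 2) / 2) :=
        hφdecay _ (hε.trans hgt)
      have h2 : d ≤ min (φ^[k] c / 2) (α3 (φ^[k] c / 2) / 2) := by
        apply le_min
        · exact (min_le_left _ _).trans (by linarith)
        · refine (min_le_right _ _).trans ?_
          have := hα3mono (by linarith : ε / 2 ≤ φ^[k] c / 2)
          linarith
      rw [Function.iterate_succ_apply']
      linarith
    have hlin : ∀ k : ℕ, φ^[k] c ≤ c - k * d := by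
      intro k
      induction k with
      | zero => simp
      | succ k ih =>
        have := hdrop k
        push_cast
        push_cast at ih
        linarith
    obtain ⟨n, hn⟩ := exists_nat_gt ((c - ε) / d)
    have h1 : (c - ε) / d < n := hn
    have h2 : c - ε < n * d := by
      rw [div_lt_iff₀ hdpos] at h1
      linarith
    have := hlin n
    have := hcon n
    linarith
  -- trajectory bound
  -- class K nonnegativity helper
  have hclassKnn : ∀ (σ : ℝ → ℝ), ClassK σ → ∀ t, 0 ≤ t → 0 ≤ σ t := by
    intro σ hσ t ht
    rcases eq_or_lt_of_le ht with h | h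
    · rw [← h, hσ.2.2]
    · rw [← hσ.2.2]
      exact (hσ.2.1 (Set.mem_Ici.2 le_rfl) (Set.mem_Ici.2 ht) h).le
  have hαlpos : ∀ s, 0 < s → 0 < αl s := by
    intro s hs
    have := hαlsm (Set.mem_Ici.2 le_rfl) (Set.mem_Ici.2 hs.le) hs
    rwa [hαl0] at this
  -- ν vanishes on nonpositive arguments
  have hν0 : ∀ t, t ≤ 0 → ν t = 0 := by
    intro t ht
    apply le_antisymm _ (hνnn t)
    apply Real.sSup_le _ le_rfl
    rintro c (rfl | ⟨z, hz, hzt, rfl⟩)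
    · exact le_rfl
    · have hn : ‖z‖ = 0 := le_antisymm (hzt.trans ht) (norm_nonneg _)
      have hz0 : z = 0 := norm_eq_zero.1 hn
      rw [hz0]
      exact le_of_eq hV00
  have hαinv0 : αinv 0 = 0 :=
    le_antisymm (hαinv_le 0 0 le_rfl le_rfl (by rw [hαl0])) (hαinv_nn 0 le_rfl)
  -- P : the transient amplitude modulus
  set P : ℝ → ℝ := fun t => αinv (ν t) with hPdef
  have hPmono : Monotone P := fun t1 t2 h => hαinv_mono _ _ (hνnn t1) (hνmono h)
  have hPz : ∀ t, t ≤ 0 → P t = 0 := by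
    intro t ht
    show αinv (ν t) = 0
    rw [hν0 t ht, hαinv0]
  have hPnn : ∀ t, 0 ≤ P t := fun t => hαinv_nn _ (hνnn t)
  have hPbd : ∀ t, P t ≤ αinv (max Vmax 0) := by
    intro t
    apply hαinv_mono _ _ (hνnn t)
    apply Real.sSup_le _ (le_max_right _ _)
    rintro c (rfl | ⟨z, hz, -, rfl⟩)
    · exact le_max_right _ _
    · exact (hVmax_le z hz).trans (le_max_left _ _)
  have hPcont : ContinuousAt P 0 := by
    rw [Metric.continuousAt_iff]
    intro ε hε
    obtain ⟨δ, hδpos, hδ⟩ := hνsmall (αl (ε / 2)) (hαlpos _ (by positivity))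
    refine ⟨δ, hδpos, ?_⟩
    intro t ht
    rw [Real.dist_eq, hPz 0 le_rfl, sub_zero]
    rw [Real.dist_eq, sub_zero] at ht
    rw [abs_of_nonneg (hPnn t)]
    rcases le_or_gt t 0 with h | h
    · rw [hPz t h]; exact hε
    · have h1 : ν t ≤ αl (ε / 2) :=
        le_trans (hνmono (le_of_lt (lt_of_le_of_lt (le_abs_self t) ht))) hδ
      have : P t ≤ ε / 2 := hαinv_le _ _ (hνnn t) (by positivity) h1
      linarith
  obtain ⟨γp, hγpK, hγpdom⟩ := exists_classK_dom P hPmono hPz (αinv (max Vmax 0)) hPbd hPcont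
  have hγpnn : ∀ t, 0 ≤ t → 0 ≤ γp t := hclassKnn γp hγpK
  -- G0 : the ISS gain modulus
  have hΔz : ∀ s, s ≤ 0 → Δ s = 0 := by
    intro s hs
    apply le_antisymm _ (hΔnn s)
    apply Real.sSup_le _ le_rfl
    rintro d (rfl | ⟨z, hz, w, hw, hws, rfl⟩)
    · exact le_rfl
    · have hn : ‖w‖ = 0 := le_antisymm (hws.trans hs) (norm_nonneg _)
      have hw0 : w = 0 := norm_eq_zero.1 hn
      rw [hw0]
      simp
  have hp2z : p2 0 = 0 := by
    apply le_antisymm _ (hp2nn 0)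
    apply Real.sSup_le _ le_rfl
    rintro t (rfl | ⟨h1, h2⟩)
    · exact le_rfl
    · by_contra hgt
      push_neg at hgt
      have := hα3pos t hgt
      linarith
  have hζnn : ∀ h_, 0 ≤ h_ → 0 ≤ ζ h_ := fun h_ hh => add_nonneg (hp2nn h_) hh
  have hζmono : Monotone ζ := fun h1 h2 h => add_le_add (hp2mono h) h
  set G0 : ℝ → ℝ := fun r => αinv (ζ (Δ r)) with hG0def
  have hG0mono : Monotone G0 := fun r1 r2 h =>
    hαinv_mono _ _ (hζnn _ (hΔnn r1)) (hζmono (hΔmono h))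
  have hG0z : ∀ r, r ≤ 0 → G0 r = 0 := by
    intro r hr
    show αinv (ζ (Δ r)) = 0
    rw [hΔz r hr]
    have hz0 : ζ 0 = 0 := by
      show p2 0 + 0 = 0
      rw [hp2z]; ring
    rw [hz0, hαinv0]
  have hG0nn : ∀ r, 0 ≤ G0 r := fun r => hαinv_nn _ (hζnn _ (hΔnn r))
  have hΔbd : ∀ s, Δ s ≤ max Dmax 0 := by
    intro s
    apply Real.sSup_le _ (le_max_right _ _)
    rintro d (rfl | ⟨z, hz, w, hw, hws, rfl⟩)
    · exact le_max_right _ _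
    · exact (hDmax z (hKB z hz) w hw).trans (le_max_left _ _)
  have hG0bd : ∀ r, G0 r ≤ αinv (ζ (max Dmax 0)) := fun r =>
    hαinv_mono _ _ (hζnn _ (hΔnn r)) (hζmono (hΔbd r))
  have hG0cont : ContinuousAt G0 0 := by
    rw [Metric.continuousAt_iff]
    intro ε hε
    have he2pos : 0 < αl (ε / 2) := hαlpos _ (by positivity)
    have hα3e : 0 < α3 (αl (ε / 2) / 2) := hα3pos _ (by linarith)
    have hstarpos : 0 < min (αl (ε / 2) / 2) (α3 (αl (ε / 2) / 2) / 4) :=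
      lt_min (by linarith) (by linarith)
    obtain ⟨δ, hδpos, hδ⟩ := hΔsmall _ hstarpos
    refine ⟨δ, hδpos, ?_⟩
    intro r hr
    rw [Real.dist_eq, hG0z 0 le_rfl, sub_zero]
    rw [Real.dist_eq, sub_zero] at hr
    rw [abs_of_nonneg (hG0nn r)]
    have hΔr : Δ r ≤ min (αl (ε / 2) / 2) (α3 (αl (ε / 2) / 2) / 4) :=
      le_trans (hΔmono (le_of_lt (lt_of_le_of_lt (le_abs_self r) hr))) hδ
    have hp2r : p2 (Δ r) ≤ αl (ε / 2) / 2 := by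
      apply hp2small _ (by linarith)
      have h1 : min (αl (ε / 2) / 2) (α3 (αl (ε / 2) / 2) / 4) ≤
        α3 (αl (ε / 2) / 2) / 4 := min_le_right _ _
      linarith
    have hζr : ζ (Δ r) ≤ αl (ε / 2) := by
      show p2 (Δ r) + Δ r ≤ αl (ε / 2)
      have h1 : min (αl (ε / 2) / 2) (α3 (αl (ε / 2) / 2) / 4) ≤ αl (ε / 2) / 2 :=
        min_le_left _ _
      linarith
    have : G0 r ≤ ε / 2 :=
      hαinv_le _ _ (hζnn _ (hΔnn r)) (by positivity) hζr
    linarith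
  obtain ⟨γγ, hγγK, hγγdom⟩ :=
    exists_classK_dom G0 hG0mono hG0z (αinv (ζ (max Dmax 0))) hG0bd hG0cont
  -- the decaying sequence q
  set q : ℕ → ℝ := fun k => αinv (φ^[k] (ν R)) with hqdef
  have hνRnn : 0 ≤ ν R := hνnn R
  have hqnn : ∀ k, 0 ≤ q k := fun k => hαinv_nn _ (hφit_nn _ hνRnn k)
  have hq_anti : Antitone q := antitone_nat_of_succ_le fun k =>
    hαinv_mono _ _ (hφit_nn _ hνRnn (k + 1)) (hφit_dec _ hνRnn k)
  have hq_tend : Tendsto q atTop (nhds 0) := by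
    rw [Metric.tendsto_atTop]
    intro ε hε
    obtain ⟨K0, hK0⟩ := htend (ν R) hνRnn (αl (ε / 2)) (hαlpos _ (by positivity))
    refine ⟨K0, fun k hk => ?_⟩
    have h1 : q k ≤ ε / 2 :=
      hαinv_le _ _ (hφit_nn _ hνRnn k) (by positivity) (hK0 k hk)
    rw [Real.dist_eq, sub_zero, abs_of_nonneg (hqnn k)]
    linarith
  -- the KL function β
  set β : ℝ → ℕ → ℝ := fun t k => Real.sqrt (γp t) * Real.sqrt (q k + (1 / 2) ^ k)
    with hβdef
  have hckpos : ∀ k : ℕ, 0 < q k + (1 / 2 : ℝ) ^ k := fun k =>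
    add_pos_of_nonneg_of_pos (hqnn k) (by positivity)
  refine ⟨β, γγ, ⟨?_, ?_⟩, hγγK, ?_⟩
  · -- ClassK in first argument
    intro k
    refine ⟨?_, ?_, ?_⟩
    · exact (Real.continuous_sqrt.comp_continuousOn hγpK.1).mul continuousOn_const
    · intro t1 h1 t2 h2 h12
      have hlt := hγpK.2.1 h1 h2 h12
      have hc : 0 < Real.sqrt (q k + (1 / 2) ^ k) := Real.sqrt_pos.2 (hckpos k)
      exact mul_lt_mul_of_pos_right (Real.sqrt_lt_sqrt (hγpnn t1 h1) hlt) hc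
    · show Real.sqrt (γp 0) * _ = 0
      rw [hγpK.2.2, Real.sqrt_zero, zero_mul]
  · -- antitone and tendsto in k
    intro s hs
    constructor
    · intro k1 k2 hk
      apply mul_le_mul_of_nonneg_left _ (Real.sqrt_nonneg _)
      apply Real.sqrt_le_sqrt
      exact add_le_add (hq_anti hk)
        (pow_le_pow_of_le_one (by norm_num) (by norm_num) hk)
    · have h1 : Tendsto (fun k : ℕ => q k + (1 / 2 : ℝ) ^ k) atTop (nhds 0) := by
        have := hq_tend.add (tendsto_pow_atTop_nhds_zero_of_lt_one
          (by norm_num : (0:ℝ) ≤ 1/2) (by norm_num : (1/2:ℝ) < 1))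
        simpa using this
      have h2 : Tendsto (fun k : ℕ => Real.sqrt (q k + (1 / 2) ^ k)) atTop (nhds 0) := by
        have := (Real.continuous_sqrt.tendsto 0).comp h1
        simpa [Function.comp_def] using this
      have h3 := h2.const_mul (Real.sqrt (γp s))
      rw [mul_zero] at h3
      exact h3
  · -- the trajectory bound
    intro z hz wseq hwseq ψ hψ0 hψstep k
    obtain ⟨Cw, hCw⟩ := hW.isBounded.exists_norm_le
    set r := ⨆ i, ‖wseq i‖ with hrdef
    have hbddr : BddAbove (Set.range fun i => ‖wseq i‖) := by
      refine ⟨Cw, ?_⟩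
      rintro x ⟨i, rfl⟩
      exact hCw _ (hwseq i)
    have hwr : ∀ i, ‖wseq i‖ ≤ r := fun i => le_ciSup hbddr i
    have hrnn : 0 ≤ r := (norm_nonneg _).trans (hwr 0)
    have hmain : ∀ k, ψ k ∈ K ∧ V (ψ k) ≤ max (φ^[k] (ν ‖z‖)) (ζ (Δ r)) := by
      intro k
      induction k with
      | zero =>
        rw [hψ0]
        refine ⟨hz, ?_⟩
        have := hνle z hz ‖z‖ le_rfl
        simpa using le_trans this (le_max_left _ (ζ (Δ r)))
      | succ k ih =>
        obtain ⟨hkK, hkV⟩ := ih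
        obtain ⟨hk1K, hk1V⟩ := hstep (ψ k) hkK (wseq k) (hwseq k) (ψ (k + 1))
          (hψstep k) r (hwr k)
        refine ⟨hk1K, ?_⟩
        have htnn : 0 ≤ V (ψ k) := hVnn _ hkK
        have htmax : V (ψ k) ≤ Vmax := hVmax_le _ hkK
        have hhnn : 0 ≤ Δ r := hΔnn r
        rcases le_or_gt (α3 (V (ψ k))) (2 * Δ r) with hcase | hcase
        · have h1 : V (ψ k) ≤ p2 (Δ r) := hp2le (Δ r) _ htmax hcase
          have h2 : 0 ≤ α3 (V (ψ k)) := hα3nn _ htnn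
          have h3 : V (ψ (k + 1)) ≤ ζ (Δ r) := by
            show V (ψ (k + 1)) ≤ p2 (Δ r) + Δ r
            linarith
          exact h3.trans (le_max_right _ _)
        · have h1 : V (ψ (k + 1)) ≤ V (ψ k) - α3 (V (ψ k)) / 2 := by linarith
          have h3 : V (ψ (k + 1)) ≤ φ (V (ψ k)) :=
            (le_trans h1 (le_max_left _ _)).trans (hφge _ htnn)
          rcases le_total (φ^[k] (ν ‖z‖)) (ζ (Δ r)) with hmx | hmx
          · have h4 : φ (V (ψ k)) ≤ φ (ζ (Δ r)) :=
              hφmono (hkV.trans (le_of_eq (max_eq_right hmx)))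
            have h5 : φ (ζ (Δ r)) ≤ ζ (Δ r) :=
              hφle_self _ (add_nonneg (hp2nn _) hhnn)
            exact le_trans h3 (le_trans h4 (h5.trans (le_max_right _ _)))
          · have h4 : φ (V (ψ k)) ≤ φ (φ^[k] (ν ‖z‖)) :=
              hφmono (hkV.trans (le_of_eq (max_eq_left hmx)))
            rw [show φ (φ^[k] (ν ‖z‖)) = φ^[k + 1] (ν ‖z‖) from
              (Function.iterate_succ_apply' φ k _).symm] at h4
            exact le_trans h3 (h4.trans (le_max_left _ _))
    obtain ⟨hψK, hψV⟩ := hmain k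
    have hγγnn : 0 ≤ γγ r := hclassKnn γγ hγγK r hrnn
    have hβnn : 0 ≤ β ‖z‖ k := mul_nonneg (Real.sqrt_nonneg _) (Real.sqrt_nonneg _)
    have hαlψ : αl ‖ψ k‖ ≤ max (φ^[k] (ν ‖z‖)) (ζ (Δ r)) := (hKlower _ hψK).trans hψV
    rcases le_total (φ^[k] (ν ‖z‖)) (ζ (Δ r)) with hmx | hmx
    · rw [max_eq_right hmx] at hαlψ
      have h5 : ‖ψ k‖ ≤ αinv (ζ (Δ r)) :=
        hαinv_ge _ _ (norm_nonneg _) (hζnn _ (hΔnn r)) hαlψ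
      have h7 : G0 r ≤ γγ r := hγγdom r hrnn
      have h6 : αinv (ζ (Δ r)) = G0 r := rfl
      rw [h6] at h5
      linarith
    · rw [max_eq_left hmx] at hαlψ
      have hAnn : 0 ≤ φ^[k] (ν ‖z‖) := hφit_nn _ (hνnn _) k
      have h5 : ‖ψ k‖ ≤ αinv (φ^[k] (ν ‖z‖)) :=
        hαinv_ge _ _ (norm_nonneg _) hAnn hαlψ
      have hb1 : αinv (φ^[k] (ν ‖z‖)) ≤ P ‖z‖ :=
        hαinv_mono _ _ hAnn (hφit_le _ (hνnn _) k)
      have hb2 : αinv (φ^[k] (ν ‖z‖)) ≤ q k := by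
        apply hαinv_mono _ _ hAnn
        exact (hφmono.iterate k) (hνmono (hKnorm z hz))
      have hx_nn : 0 ≤ ‖ψ k‖ := norm_nonneg _
      have hPq : ‖ψ k‖ ≤ Real.sqrt (P ‖z‖ * q k) := by
        have h1 : ‖ψ k‖ * ‖ψ k‖ ≤ P ‖z‖ * q k :=
          mul_le_mul (h5.trans hb1) (h5.trans hb2) hx_nn (hPnn _)
        calc ‖ψ k‖ = Real.sqrt (‖ψ k‖ * ‖ψ k‖) := (Real.sqrt_mul_self hx_nn).symm
          _ ≤ Real.sqrt (P ‖z‖ * q k) := Real.sqrt_le_sqrt h1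
      have hPq2 : Real.sqrt (P ‖z‖ * q k) ≤ β ‖z‖ k := by
        have h1 : P ‖z‖ * q k ≤ γp ‖z‖ * (q k + (1 / 2) ^ k) :=
          mul_le_mul (hγpdom _ (norm_nonneg z))
            (le_add_of_nonneg_right (by positivity)) (hqnn k) (hγpnn _ (norm_nonneg z))
        calc Real.sqrt (P ‖z‖ * q k)
            ≤ Real.sqrt (γp ‖z‖ * (q k + (1 / 2) ^ k)) := Real.sqrt_le_sqrt h1
          _ = Real.sqrt (γp ‖z‖) * Real.sqrt (q k + (1 / 2) ^ k) :=
            Real.sqrt_mul (hγpnn _ (norm_nonneg z)) _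
      linarith [hPq.trans hPq2]
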